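/- Let V be a contiguous vtree over ordered variables X_1,…,X_n of depth d, and let G = V_{v→Z_v} be the associated tree with latents at internal vertices. For each interval [a,b] (1 ≤ a ≤ b ≤ n) let C_{a:b} be the set of ⊆-maximal nodes v of V whose covered interval is contained in {X_a,…,X_b}. Then: (i) the covered intervals of the elements of C_{a:b} partition {X_a,…,X_b}; (ii) if a ≤ c ≤ e ≤ b, then every element of C_{c:e} has an ancestor-or-self in C_{a:b}; (iii) |C_{a:b}| ≤ 4d. Consequently, for any contiguous vtree W over X_1,…,X_n, assigning C_w := C_{a:b} to the node w of W with covered interval {X_a,…,X_b} (replacing any leaf-variable elements by their parents in G) yields a valid labelling of W with respect to G of cardinality at most 12d. -/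

import Mathlib

open scoped BigOperators

/-! ### Probabilistic circuits

A probabilistic circuit is a rooted DAG of leaf, sum and product nodes.  We represent the
DAG by a finite sequence of nodes; well-formedness (`PC.WF`) requires that the children of
every node have strictly smaller index, and the root is the node of largest index. -/

inductive PCNode (ι : Type) (Val : ι → Type) (N : ℕ) where
  | leaf (v : ι) (f : Val v → ℝ)
  | sum (ch : List (Fin N × ℝ))
  | prod (ch : List (Fin N))

namespace PCNode

variable {ι : Type} {Val : ι → Type} {N : ℕ}

def children : PCNode ι Val N → List (Fin N)
  | .leaf _ _ => []
  | .sum ch => ch.map Prod.fst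
  | .prod ch => ch

def childCount : PCNode ι Val N → ℕ
  | .leaf _ _ => 0
  | .sum ch => ch.length
  | .prod ch => ch.length

def isProdB : PCNode ι Val N → Bool
  | .prod _ => true
  | _ => false

end PCNode

structure PC (ι : Type) (Val : ι → Type) where
  numNodes : ℕ
  node : Fin numNodes → PCNode ι Val numNodes

namespace PC

variable {ι : Type} {Val : ι → Type}

/-- Acyclicity: every edge goes from a larger to a strictly smaller index. -/
def WF (C : PC ι Val) : Prop :=
  ∀ i : Fin C.numNodes, ∀ j ∈ (C.node i).children, (j : ℕ) < (i : ℕ)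

/-- Fuelled evaluation of a node; for a well-formed circuit, fuel `C.numNodes` always
suffices. -/
def evalFuel (C : PC ι Val) (x : ∀ i, Val i) : ℕ → Fin C.numNodes → ℝ
  | 0, _ => 0
  | k+1, i =>
    match C.node i with
    | .leaf v f => f (x v)
    | .sum ch => (ch.map fun p => p.2 * evalFuel C x k p.1).sum
    | .prod ch => (ch.map fun j => evalFuel C x k j).prod

def nodeEval (C : PC ι Val) (x : ∀ i, Val i) (i : Fin C.numNodes) : ℝ :=
  evalFuel C x C.numNodes i

/-- The function computed by the circuit (the value of its root node). -/
def eval (C : PC ι Val) (x : ∀ i, Val i) : ℝ :=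
  if h : 0 < C.numNodes then nodeEval C x ⟨C.numNodes - 1, by omega⟩ else 0

def scopeFuel [DecidableEq ι] (C : PC ι Val) : ℕ → Fin C.numNodes → Finset ι
  | 0, _ => ∅
  | k+1, i =>
    match C.node i with
    | .leaf v _ => {v}
    | .sum ch => (ch.map fun p => scopeFuel C k p.1).foldr (· ∪ ·) ∅
    | .prod ch => (ch.map fun j => scopeFuel C k j).foldr (· ∪ ·) ∅

/-- The scope of a node: the set of variables its subcircuit depends on. -/
def scope [DecidableEq ι] (C : PC ι Val) (i : Fin C.numNodes) : Finset ι :=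
  scopeFuel C C.numNodes i

def rootScope [DecidableEq ι] (C : PC ι Val) : Finset ι :=
  if h : 0 < C.numNodes then scope C ⟨C.numNodes - 1, by omega⟩ else ∅

/-- The size of a circuit: its number of edges. -/
def numEdges (C : PC ι Val) : ℕ :=
  ∑ i : Fin C.numNodes, (C.node i).childCount

def depthFuel (C : PC ι Val) : ℕ → Fin C.numNodes → ℕ
  | 0, _ => 0
  | k+1, i =>
    match C.node i with
    | .leaf _ _ => 0
    | .sum ch => (ch.map fun p => depthFuel C k p.1 + 1).foldr max 0
    | .prod ch => (ch.map fun j => depthFuel C k j + 1).foldr max 0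

/-- The depth of a circuit: the length of the longest root-to-leaf path. -/
def depth (C : PC ι Val) : ℕ :=
  if h : 0 < C.numNodes then depthFuel C C.numNodes ⟨C.numNodes - 1, by omega⟩ else 0

/-- All children of any sum node have the same scope. -/
def Smooth [DecidableEq ι] (C : PC ι Val) : Prop :=
  ∀ (i : Fin C.numNodes) (ch : List (Fin C.numNodes × ℝ)), C.node i = .sum ch →
    ∀ p ∈ ch, ∀ q ∈ ch, scope C p.1 = scope C q.1

/-- The children of any product node have pairwise disjoint scopes. -/
def Decomposable [DecidableEq ι] (C : PC ι Val) : Prop :=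
  ∀ (i : Fin C.numNodes) (ch : List (Fin C.numNodes)), C.node i = .prod ch →
    ch.Pairwise fun a b => Disjoint (scope C a) (scope C b)

/-- Sum-node weights and leaf functions are nonnegative. -/
def NonnegWeights (C : PC ι Val) : Prop :=
  (∀ (i : Fin C.numNodes) (ch : List (Fin C.numNodes × ℝ)), C.node i = .sum ch →
      ∀ p ∈ ch, 0 ≤ p.2) ∧
  (∀ (i : Fin C.numNodes) (v : ι) (f : Val v → ℝ), C.node i = .leaf v f → ∀ a, 0 ≤ f a)

/-- The weights of every sum node sum to one. -/
def NormalizedSums (C : PC ι Val) : Prop :=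
  ∀ (i : Fin C.numNodes) (ch : List (Fin C.numNodes × ℝ)), C.node i = .sum ch →
    (ch.map Prod.snd).sum = 1

/-- Every leaf computes a probability distribution over its variable. -/
def NormalizedLeaves [∀ i, Fintype (Val i)] (C : PC ι Val) : Prop :=
  ∀ (i : Fin C.numNodes) (v : ι) (f : Val v → ℝ), C.node i = .leaf v f → ∑ a, f a = 1

/-- Sum/leaf and product nodes alternate: children of sums are products and children of
products are sums or leaves. -/
def Alternating (C : PC ι Val) : Prop :=
  (∀ (i : Fin C.numNodes) (ch : List (Fin C.numNodes × ℝ)), C.node i = .sum ch →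
      ∀ p ∈ ch, (C.node p.1).isProdB = true) ∧
  (∀ (i : Fin C.numNodes) (ch : List (Fin C.numNodes)), C.node i = .prod ch →
      ∀ j ∈ ch, (C.node j).isProdB = false)

/-- For every input, at most one child of each sum node evaluates to a nonzero value. -/
def Deterministic (C : PC ι Val) : Prop :=
  ∀ (x : ∀ i, Val i) (i : Fin C.numNodes) (ch : List (Fin C.numNodes × ℝ)),
    C.node i = .sum ch → ∀ p ∈ ch, ∀ q ∈ ch,
      nodeEval C x p.1 ≠ 0 → nodeEval C x q.1 ≠ 0 → p.1 = q.1

/-- The number of product nodes with a given scope. -/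
def prodCount [DecidableEq ι] (C : PC ι Val) (S : Finset ι) : ℕ :=
  (Finset.univ.filter fun i : Fin C.numNodes =>
    (C.node i).isProdB = true ∧ scope C i = S).card

/-- The index of a product node within the product nodes sharing its scope. -/
def idxOf [DecidableEq ι] (C : PC ι Val) (i : Fin C.numNodes) : ℕ :=
  (Finset.univ.filter fun j : Fin C.numNodes =>
    (j : ℕ) < (i : ℕ) ∧ (C.node j).isProdB = true ∧ scope C j = scope C i).card

/-- Bundle of basic "probabilistic circuit over all the variables" conditions:
well-formed DAG, nonnegative normalized weights, normalized leaves, alternation of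
sum/leaf and product nodes, and the root depending on all variables. -/
def IsPCOver [DecidableEq ι] [Fintype ι] [∀ i, Fintype (Val i)] (C : PC ι Val) : Prop :=
  C.WF ∧ C.NonnegWeights ∧ C.NormalizedSums ∧ C.NormalizedLeaves ∧ C.Alternating ∧
    C.rootScope = Finset.univ

end PC

/-! ### Vtrees -/

inductive Vtree (ι : Type) where
  | leaf (x : ι)
  | node (l r : Vtree ι)
deriving DecidableEq

namespace Vtree

variable {ι : Type}

def varsFinset [DecidableEq ι] : Vtree ι → Finset ι
  | .leaf x => {x}
  | .node l r => varsFinset l ∪ varsFinset r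

def leavesList : Vtree ι → List ι
  | .leaf x => [x]
  | .node l r => leavesList l ++ leavesList r

/-- A vtree over a set `S` of variables: its leaves are in bijection with `S`. -/
def ValidOver (T : Vtree ι) (S : Set ι) : Prop :=
  T.leavesList.Nodup ∧ ∀ x : ι, x ∈ T.leavesList ↔ x ∈ S

def numNodesV : Vtree ι → ℕ
  | .leaf _ => 1
  | .node l r => numNodesV l + numNodesV r + 1

def IsChildOf (c p : Vtree ι) : Prop :=
  match p with
  | .leaf _ => False
  | .node l r => c = l ∨ c = r

inductive IsSubtreeOf : Vtree ι → Vtree ι → Prop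
  | refl (t : Vtree ι) : IsSubtreeOf t t
  | left {s l r : Vtree ι} : IsSubtreeOf s l → IsSubtreeOf s (.node l r)
  | right {s l r : Vtree ι} : IsSubtreeOf s r → IsSubtreeOf s (.node l r)

def subtreesList : Vtree ι → List (Vtree ι)
  | .leaf x => [.leaf x]
  | .node l r => .node l r :: (subtreesList l ++ subtreesList r)

def isNodeB : Vtree ι → Bool
  | .leaf _ => false
  | .node _ _ => true

/-- The inner (non-leaf) nodes of a vtree. -/
def innerFinset [DecidableEq ι] (V : Vtree ι) : Finset (Vtree ι) :=
  (V.subtreesList.filter fun t => t.isNodeB).toFinset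

def depthV : Vtree ι → ℕ
  | .leaf _ => 0
  | .node l r => max (depthV l) (depthV r) + 1

/-- The nodes of a vtree occurring at a given depth. -/
def atDepth : Vtree ι → ℕ → Set (Vtree ι)
  | t, 0 => {t}
  | .leaf _, _+1 => ∅
  | .node l r, k+1 => atDepth l k ∪ atDepth r k

theorem numNodesV_lt_of_isChildOf {c p : Vtree ι} (h : c.IsChildOf p) :
    c.numNodesV < p.numNodesV := by
  cases p with
  | leaf x => exact h.elim
  | node l r =>
    rcases h with h | h <;> subst h <;> simp only [numNodesV] <;> omega

end Vtree

/-- The tree `V_{v → Z_v}`, viewed as a graph: vertices are the subtrees of `V`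
(inner subtrees play the role of the latent variables `Z_v`, leaves the role of the
variables `X`), with edges between each node and its children. -/
def vtreeGraph {ι : Type} (V : Vtree ι) : SimpleGraph (Vtree ι) where
  Adj s t := (s.IsChildOf t ∨ t.IsChildOf s) ∧ s.IsSubtreeOf V ∧ t.IsSubtreeOf V
  symm := by
    constructor
    rintro s t ⟨h, hs, ht⟩
    exact ⟨h.symm, ht, hs⟩
  loopless := by
    constructor
    rintro s ⟨h, -, -⟩
    rcases h with h | h <;>
      exact absurd (Vtree.numNodesV_lt_of_isChildOf h) (lt_irrefl _)

namespace PC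

variable {ι : Type} {Val : ι → Type}

/-- Structured decomposability with respect to a vtree: every product node has exactly
two children, whose scopes are the variables of the two children of an inner node of the
vtree. -/
def StructuredBy [DecidableEq ι] (C : PC ι Val) (V : Vtree ι) : Prop :=
  ∀ (i : Fin C.numNodes) (ch : List (Fin C.numNodes)), C.node i = .prod ch →
    ∃ (c₁ c₂ : Fin C.numNodes) (l r : Vtree ι), ch = [c₁, c₂] ∧
      (Vtree.node l r).IsSubtreeOf V ∧
      scope C c₁ = l.varsFinset ∧ scope C c₂ = r.varsFinset

/-- Generalized structured decomposability (for products with arbitrarily many children):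
every product node decomposes the variables of some vtree node into the variables of a
family of its subtrees. -/
def StructuredByGen [DecidableEq ι] (C : PC ι Val) (V : Vtree ι) : Prop :=
  ∀ (i : Fin C.numNodes) (ch : List (Fin C.numNodes)), C.node i = .prod ch →
    ∃ u : Vtree ι, u.IsSubtreeOf V ∧
      (∀ j ∈ ch, ∃ s : Vtree ι, s.IsSubtreeOf u ∧ scope C j = s.varsFinset) ∧
      (ch.map fun j => scope C j).foldr (· ∪ ·) ∅ = u.varsFinset

/-- The hidden state size: the maximum number of product nodes sharing the scope of an
inner vtree node. -/
def hiddenStateSize [DecidableEq ι] (C : PC ι Val) (V : Vtree ι) : ℕ :=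
  V.innerFinset.sup fun t => prodCount C t.varsFinset

end PC

/-! ### Contiguity and linear vtrees (for variables `Fin n`) -/

def IsIntervalFin {n : ℕ} (S : Finset (Fin n)) : Prop :=
  ∃ a b : ℕ, ∀ i : Fin n, i ∈ S ↔ (a ≤ (i : ℕ) ∧ (i : ℕ) ≤ b)

def PC.ContiguousPC {n : ℕ} {Val : Fin n → Type} (C : PC (Fin n) Val) : Prop :=
  ∀ i : Fin C.numNodes, IsIntervalFin (PC.scope C i)

def Vtree.ContiguousV {n : ℕ} (V : Vtree (Fin n)) : Prop :=
  ∀ t : Vtree (Fin n), t.IsSubtreeOf V → IsIntervalFin t.varsFinset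

inductive Vtree.IsLinearFrom {n : ℕ} : ℕ → Vtree (Fin n) → Prop
  | single (a : ℕ) (ha : a < n) (h : a + 1 = n) : IsLinearFrom a (.leaf ⟨a, ha⟩)
  | cons (a : ℕ) (ha : a < n) (T : Vtree (Fin n)) (h : a + 1 < n) :
      IsLinearFrom (a+1) T → IsLinearFrom a (.node (.leaf ⟨a, ha⟩) T)

/-- The (right-)linear vtree, splitting `{Xᵢ}` from `{Xᵢ₊₁, …, Xₙ}` at each level. -/
def Vtree.IsLinear {n : ℕ} (V : Vtree (Fin n)) : Prop := Vtree.IsLinearFrom 0 V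

/-! ### Blocking, covers and vtree labellings -/

/-- `C` blocks all paths between `A` and `B` in the graph `G`. -/
def SimpleGraph.BlocksSets {α : Type} (G : SimpleGraph α) (C A B : Set α) : Prop :=
  ∀ ⦃a b : α⦄, a ∈ A → b ∈ B → ∀ p : G.Walk a b, ∃ c ∈ C, c ∈ p.support

/-- A valid labelling of a target vtree `W` with respect to a (tree-shaped) graph `G`,
where the variable `i` is represented by the vertex `xv i` and `X` is the set of all
variables.  The root is labelled `∅`, each leaf is labelled by the parent (i.e. the
neighbours) of its variable, the label of every inner node covers its variables, and the
labels of the children block their variables from the other labels. -/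
structure IsValidLabelling {α ι : Type} [DecidableEq ι] (G : SimpleGraph α) (xv : ι → α)
    (X : Set ι) (W : Vtree ι) (label : Vtree ι → Set α) : Prop where
  root_empty : label W = ∅
  leaf_parent : ∀ x : ι, (Vtree.leaf x).IsSubtreeOf W →
    label (.leaf x) = {p | G.Adj (xv x) p}
  covers : ∀ l r : Vtree ι, (Vtree.node l r).IsSubtreeOf W →
    G.BlocksSets (label (.node l r))
      (xv '' ((Vtree.node l r).varsFinset : Set ι))
      (xv '' (X \ ((Vtree.node l r).varsFinset : Set ι)))
  blocks_left : ∀ l r : Vtree ι, (Vtree.node l r).IsSubtreeOf W →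
    G.BlocksSets (label l) (xv '' (l.varsFinset : Set ι)) (label r ∪ label (.node l r))
  blocks_right : ∀ l r : Vtree ι, (Vtree.node l r).IsSubtreeOf W →
    G.BlocksSets (label r) (xv '' (r.varsFinset : Set ι)) (label l ∪ label (.node l r))

/-! ### The augmented circuit -/

/-- Value types for the augmented circuit: the original variables keep their values, and
each latent variable `Z_v` (indexed by the vtree node `v`) takes natural number values. -/
@[reducible] def augVal {ι : Type} (Val : ι → Type) : ι ⊕ Vtree ι → Type
  | .inl i => Val i
  | .inr _ => ℕ

/-- Find the subtree of a vtree with the given variable set (if any). -/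
def Vtree.findByVars {ι : Type} [DecidableEq ι] : Vtree ι → Finset ι → Option (Vtree ι)
  | .leaf x, S => if S = {x} then some (.leaf x) else none
  | .node l r, S =>
      if S = (Vtree.node l r).varsFinset then some (.node l r)
      else (findByVars l S).orElse fun _ => findByVars r S

/-- The augmented circuit `A_aug` of a structured circuit: each product node `t` with
scope `X_v` gets an additional leaf child over the latent variable `Z_v`, computing the
indicator function `1[Z_v = idx(t)]`.  (Node `2*i+1` is a copy of node `i` of the original
circuit and node `2*i` is the extra indicator leaf attached to it when `i` is a product.) -/
def PC.augment {ι : Type} {Val : ι → Type} [DecidableEq ι] (C : PC ι Val) (V : Vtree ι) :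
    PC (ι ⊕ Vtree ι) (augVal Val) where
  numNodes := 2 * C.numNodes
  node := fun k =>
    if hk : (k : ℕ) % 2 = 1 then
      match C.node ⟨(k : ℕ) / 2, by have := k.isLt; omega⟩ with
      | .leaf v f => .leaf (Sum.inl v) f
      | .sum ch => .sum (ch.map fun p =>
          ((⟨2 * (p.1 : ℕ) + 1, by have := p.1.isLt; omega⟩ : Fin (2 * C.numNodes)), p.2))
      | .prod ch => .prod ((ch.map fun (j : Fin C.numNodes) =>
          (⟨2 * (j : ℕ) + 1, by have := j.isLt; omega⟩ : Fin (2 * C.numNodes))) ++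
          [⟨2 * ((k : ℕ) / 2), by have := k.isLt; omega⟩])
    else
      match C.node ⟨(k : ℕ) / 2, by have := k.isLt; omega⟩ with
      | .prod _ => .leaf
          (Sum.inr ((V.findByVars (PC.scope C ⟨(k : ℕ) / 2, by have := k.isLt; omega⟩)).getD V))
          (fun m => if m = PC.idxOf C ⟨(k : ℕ) / 2, by have := k.isLt; omega⟩ then 1 else 0)
      | _ => .leaf (Sum.inr V) (fun _ => 1)

/-- Combine an assignment of the observed variables with an assignment of the latent
variables into an assignment for the augmented circuit. -/
def augAssign {ι : Type} {Val : ι → Type} [DecidableEq ι] (V : Vtree ι) (x : ∀ i, Val i)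
    (z : ∀ t ∈ V.innerFinset, ℕ) : ∀ s : ι ⊕ Vtree ι, augVal Val s :=
  fun s => match s with
  | .inl i => x i
  | .inr t => if ht : t ∈ V.innerFinset then z t ht else 0

/-- The vtree of the augmented circuit: a new leaf for `Z_v` is attached at each inner
node `v`. -/
def Vtree.augTree {ι : Type} : Vtree ι → Vtree (ι ⊕ Vtree ι)
  | .leaf x => .leaf (.inl x)
  | .node l r => .node (.leaf (.inr (.node l r))) (.node (augTree l) (augTree r))

/-- `maxCover V S`: the set of ⊆-maximal nodes of the vtree `V` whose covered variables
are contained in `S`. -/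
def maxCover {ι : Type} [DecidableEq ι] (V : Vtree ι) (S : Set ι) : Set (Vtree ι) :=
  {t : Vtree ι | t.IsSubtreeOf V ∧ (t.varsFinset : Set ι) ⊆ S ∧
    ∀ u : Vtree ι, u.IsSubtreeOf V → (u.varsFinset : Set ι) ⊆ S → t.IsSubtreeOf u → u = t}

/-- The interval `{i : Fin n | a ≤ i ≤ b}` of variables. -/
def finInterval (n : ℕ) (a b : ℕ) : Set (Fin n) := {i : Fin n | a ≤ (i : ℕ) ∧ (i : ℕ) ≤ b}

/-- Replace a leaf node of `V` by its parent in `V` (i.e. by its set of neighbours in the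
tree `V_{v→Z_v}`); inner nodes are kept. -/
def replLeaf {ι : Type} [DecidableEq ι] (V : Vtree ι) : Vtree ι → Set (Vtree ι)
  | .leaf x => {p | (vtreeGraph V).Adj (.leaf x) p}
  | t => {t}

/-- The labelling of a target vtree `W` induced by maximal covers in `V`: the node `w`
(other than the root, which gets `∅` by the convention in the definition of a labelling)
with covered variables `S` is labelled by `C_S`, with any leaf-variable elements replaced
by their parents in `V_{v→Z_v}`. -/
def coverLabel {ι : Type} [DecidableEq ι] (V W : Vtree ι) : Vtree ι → Set (Vtree ι) :=
  fun w => if w = W then ∅ else ⋃ t ∈ maxCover V (w.varsFinset : Set ι), replLeaf V t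

set_option linter.unusedSectionVars false
namespace Vtree
variable {ι : Type} [DecidableEq ι]

theorem mem_vars_iff_mem_leaves {T : Vtree ι} {x : ι} :
    x ∈ T.varsFinset ↔ x ∈ T.leavesList := by
  induction T with
  | leaf y => simp [varsFinset, leavesList]
  | node l r ihl ihr => simp [varsFinset, leavesList, ihl, ihr]

theorem varsFinset_nonempty (T : Vtree ι) : T.varsFinset.Nonempty := by
  induction T with
  | leaf y => simp [varsFinset]
  | node l r ihl ihr => exact Finset.Nonempty.inl ihl

theorem IsSubtreeOf.trans' {s t u : Vtree ι} (h1 : s.IsSubtreeOf t) (h2 : t.IsSubtreeOf u) :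
    s.IsSubtreeOf u := by
  induction h2 with
  | refl => exact h1
  | left _ ih => exact .left ih
  | right _ ih => exact .right ih

theorem vars_subset {s t : Vtree ι} (h : s.IsSubtreeOf t) : s.varsFinset ⊆ t.varsFinset := by
  induction h with
  | refl => exact subset_rfl
  | left _ ih => exact ih.trans (by simp [varsFinset])
  | right _ ih => exact ih.trans (by simp [varsFinset])

theorem eq_or_lt_of_subtree {s t : Vtree ι} (h : s.IsSubtreeOf t) :
    s = t ∨ s.numNodesV < t.numNodesV := by
  induction h with
  | refl => exact Or.inl rfl
  | left h ih =>
    right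
    rcases ih with rfl | ih <;> simp [numNodesV] <;> omega
  | right h ih =>
    right
    rcases ih with rfl | ih <;> simp [numNodesV] <;> omega

theorem nodup_of_subtree {s t : Vtree ι} (h : s.IsSubtreeOf t) (ht : t.leavesList.Nodup) :
    s.leavesList.Nodup := by
  induction h with
  | refl => exact ht
  | left _ ih => exact ih ((List.nodup_append.mp ht).1
  )
  | right _ ih => exact ih ((List.nodup_append.mp ht).2.1)

theorem leaf_isSubtreeOf_iff {t : Vtree ι} {x : ι} :
    (Vtree.leaf x).IsSubtreeOf t ↔ x ∈ t.varsFinset := by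
  constructor
  · intro h
    exact vars_subset h (by simp [varsFinset])
  · intro h
    induction t with
    | leaf y => simp [varsFinset] at h; subst h; exact .refl _
    | node l r ihl ihr =>
      simp [varsFinset] at h
      rcases h with h | h
      · exact .left (ihl h)
      · exact .right (ihr h)

theorem IsChildOf.isSubtreeOf' {c p : Vtree ι} (h : c.IsChildOf p) : c.IsSubtreeOf p := by
  cases p with
  | leaf y => exact h.elim
  | node l r =>
    rcases h with rfl | rfl
    · exact .left (.refl _)
    · exact .right (.refl _)

theorem vars_disjoint_of_nodup {l r : Vtree ι} (h : (Vtree.node l r).leavesList.Nodup) :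
    ∀ x, x ∈ l.varsFinset → x ∉ r.varsFinset := by
  intro x hl hr
  have h' : (l.leavesList ++ r.leavesList).Nodup := h
  exact (List.nodup_append'.mp h').2.2 (mem_vars_iff_mem_leaves.mp hl)
    (mem_vars_iff_mem_leaves.mp hr)

theorem trichotomy {V : Vtree ι} (hnd : V.leavesList.Nodup) :
    ∀ {s t : Vtree ι}, s.IsSubtreeOf V → t.IsSubtreeOf V →
    s.IsSubtreeOf t ∨ t.IsSubtreeOf s ∨ ∀ x, x ∈ s.varsFinset → x ∉ t.varsFinset := by
  induction V with
  | leaf y =>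
    intro s t hs ht
    cases hs; cases ht; exact Or.inl (.refl _)
  | node l r ihl ihr =>
    intro s t hs ht
    cases hs with
    | refl => exact Or.inr (Or.inl ht)
    | left hs' =>
      cases ht with
      | refl => exact Or.inl (.left hs')
      | left ht' => exact ihl ((List.nodup_append.mp hnd).1) hs' ht'
      | right ht' =>
        refine Or.inr (Or.inr fun x hxs hxt => ?_)
        exact vars_disjoint_of_nodup hnd x (vars_subset hs' hxs) (vars_subset ht' hxt)
    | right hs' =>
      cases ht with
      | refl => exact Or.inl (.right hs')
      | right ht' => exact ihr ((List.nodup_append.mp hnd).2.1) hs' ht'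
      | left ht' =>
        refine Or.inr (Or.inr fun x hxs hxt => ?_)
        exact vars_disjoint_of_nodup hnd x (vars_subset ht' hxt) (vars_subset hs' hxs)

theorem parent_unique {V : Vtree ι} (hnd : V.leavesList.Nodup) {c p q : Vtree ι}
    (hp : p.IsSubtreeOf V) (hq : q.IsSubtreeOf V)
    (hcp : c.IsChildOf p) (hcq : c.IsChildOf q) : p = q := by
  have key : ∀ p q : Vtree ι, p.IsSubtreeOf q → c.IsChildOf p → c.IsChildOf q →
      q.leavesList.Nodup → p = q := by
    intro p q h hcp' hcq' hndq
    cases h with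
    | refl => rfl
    | @left l r h' =>
      exfalso
      rcases hcq' with rfl | rfl
      · have h1 : c.numNodesV < p.numNodesV := numNodesV_lt_of_isChildOf hcp'
        rcases eq_or_lt_of_subtree h' with rfl | h2 <;> omega
      · have hsub : c.varsFinset ⊆ l.varsFinset :=
          (vars_subset hcp'.isSubtreeOf').trans (vars_subset h')
        obtain ⟨x, hx⟩ := varsFinset_nonempty c
        exact vars_disjoint_of_nodup hndq x (hsub hx) hx
    | @right l r h' =>
      exfalso
      rcases hcq' with rfl | rfl
      · have hsub : c.varsFinset ⊆ r.varsFinset :=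
          (vars_subset hcp'.isSubtreeOf').trans (vars_subset h')
        obtain ⟨x, hx⟩ := varsFinset_nonempty c
        exact vars_disjoint_of_nodup hndq x hx (hsub hx)
      · have h1 : c.numNodesV < p.numNodesV := numNodesV_lt_of_isChildOf hcp'
        rcases eq_or_lt_of_subtree h' with rfl | h2 <;> omega
  rcases trichotomy hnd hp hq with h | h | h
  · exact key p q h hcp hcq (nodup_of_subtree hq hnd)
  · exact (key q p h hcq hcp (nodup_of_subtree hp hnd)).symm
  · exfalso
    obtain ⟨x, hx⟩ := varsFinset_nonempty c
    exact h x (vars_subset hcp.isSubtreeOf' hx) (vars_subset hcq.isSubtreeOf' hx)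

theorem eq_or_exists_parent {s t : Vtree ι} (h : s.IsSubtreeOf t) :
    s = t ∨ ∃ p, p.IsSubtreeOf t ∧ s.IsChildOf p := by
  induction h with
  | refl => exact Or.inl rfl
  | left h ih =>
    right
    rcases ih with rfl | ⟨p, hp, hc⟩
    · exact ⟨_, .refl _, Or.inl rfl⟩
    · exact ⟨p, .left hp, hc⟩
  | right h ih =>
    right
    rcases ih with rfl | ⟨p, hp, hc⟩
    · exact ⟨_, .refl _, Or.inr rfl⟩
    · exact ⟨p, .right hp, hc⟩

theorem self_mem_subtreesList (t : Vtree ι) : t ∈ t.subtreesList := by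
  cases t <;> simp [subtreesList]

theorem mem_subtreesList_of_isSubtreeOf {s t : Vtree ι} (h : s.IsSubtreeOf t) :
    s ∈ t.subtreesList := by
  induction h with
  | refl => exact self_mem_subtreesList _
  | left _ ih => simp only [subtreesList, List.mem_cons, List.mem_append]; tauto
  | right _ ih => simp only [subtreesList, List.mem_cons, List.mem_append]; tauto

theorem subtree_set_finite (V : Vtree ι) : {t : Vtree ι | t.IsSubtreeOf V}.Finite :=
  Set.Finite.subset (V.subtreesList.toFinset : Finset (Vtree ι)).finite_toSet
    (fun t ht => by simpa using mem_subtreesList_of_isSubtreeOf ht)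

theorem eq_leaf_of_vars_subset_singleton {V : Vtree ι} (hnd : V.leavesList.Nodup) {x : ι}
    {t : Vtree ι} (htV : t.IsSubtreeOf V) (hts : (t.varsFinset : Set ι) ⊆ {x}) :
    t = Vtree.leaf x := by
  cases t with
  | leaf y =>
    have hy : y ∈ ({x} : Set ι) := hts (by simp [varsFinset])
    simp at hy; subst hy; rfl
  | node l r =>
    exfalso
    obtain ⟨y1, hy1⟩ := varsFinset_nonempty l
    obtain ⟨y2, hy2⟩ := varsFinset_nonempty r
    have h1 : y1 ∈ ({x} : Set ι) := hts (by simp [varsFinset]; exact Or.inl hy1)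
    have h2 : y2 ∈ ({x} : Set ι) := hts (by simp [varsFinset]; exact Or.inr hy2)
    simp at h1 h2
    exact vars_disjoint_of_nodup (nodup_of_subtree htV hnd) x (h1 ▸ hy1) (h2 ▸ hy2)

end Vtree

section Aux2
variable {ι : Type} [DecidableEq ι]
open Vtree

theorem maxCover_finite (V : Vtree ι) (S : Set ι) : (maxCover V S).Finite :=
  (Vtree.subtree_set_finite V).subset fun t ht => ht.1

theorem exists_maxCover_above {V : Vtree ι} {S : Set ι}
    (t : Vtree ι) (htV : t.IsSubtreeOf V) (htS : (t.varsFinset : Set ι) ⊆ S) :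
    ∃ u ∈ maxCover V S, t.IsSubtreeOf u := by
  by_cases hmax : ∀ u : Vtree ι, u.IsSubtreeOf V → (u.varsFinset : Set ι) ⊆ S →
      t.IsSubtreeOf u → u = t
  · exact ⟨t, ⟨htV, htS, hmax⟩, .refl _⟩
  · push_neg at hmax
    obtain ⟨u, huV, huS, htu, hne⟩ := hmax
    obtain ⟨w, hw, huw⟩ := exists_maxCover_above u huV huS
    exact ⟨w, hw, htu.trans' huw⟩
termination_by V.numNodesV - t.numNodesV
decreasing_by
  rcases Vtree.eq_or_lt_of_subtree htu with h | h
  · exact absurd h.symm hne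
  · rcases Vtree.eq_or_lt_of_subtree huV with rfl | h2 <;> omega

theorem maxCover_unique {V : Vtree ι} {S : Set ι} (hnd : V.leavesList.Nodup)
    {t u : Vtree ι} (ht : t ∈ maxCover V S) (hu : u ∈ maxCover V S)
    {x : ι} (hxt : x ∈ t.varsFinset) (hxu : x ∈ u.varsFinset) : t = u := by
  rcases Vtree.trichotomy hnd ht.1 hu.1 with h | h | h
  · exact (ht.2.2 u hu.1 hu.2.1 h).symm
  · exact hu.2.2 t ht.1 ht.2.1 h
  · exact absurd hxu (h x hxt)

theorem maxCover_singleton {V : Vtree ι} (hnd : V.leavesList.Nodup) {x : ι}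
    (hx : (Vtree.leaf x).IsSubtreeOf V) :
    maxCover V ({x} : Set ι) = {Vtree.leaf x} := by
  ext t
  simp only [Set.mem_singleton_iff]
  constructor
  · intro ht
    exact Vtree.eq_leaf_of_vars_subset_singleton hnd ht.1 ht.2.1
  · rintro rfl
    refine ⟨hx, by simp [Vtree.varsFinset], fun u huV huS _ => ?_⟩
    exact Vtree.eq_leaf_of_vars_subset_singleton hnd huV huS

theorem cut_lemma {V : Vtree ι} (hnd : V.leavesList.Nodup)
    {t : Vtree ι} (htV : t.IsSubtreeOf V) {u v : Vtree ι} (p : (vtreeGraph V).Walk u v)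
    (havoid : t ∉ p.support) : (u.IsSubtreeOf t ↔ v.IsSubtreeOf t) := by
  induction p with
  | nil => exact Iff.rfl
  | @cons a b c h q ih =>
    simp only [SimpleGraph.Walk.support_cons, List.mem_cons] at havoid
    push_neg at havoid
    obtain ⟨hta, htq⟩ := havoid
    obtain ⟨hrel, haV, hbV⟩ := h
    have key : ∀ a b : Vtree ι, a.IsChildOf b → a.IsSubtreeOf V → b.IsSubtreeOf V →
        t ≠ a → (a.IsSubtreeOf t ↔ b.IsSubtreeOf t) := by
      intro a b hab haV hbV hta
      constructor
      · intro hat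
        rcases Vtree.eq_or_exists_parent hat with rfl | ⟨q', hq', hcq'⟩
        · exact absurd rfl hta.symm
        · have e : b = q' := Vtree.parent_unique hnd hbV (hq'.trans' htV) hab hcq'
          rw [e]; exact hq'
      · intro hbt
        exact hab.isSubtreeOf'.trans' hbt
    have htb : t ≠ b := fun e => htq (e ▸ q.start_mem_support)
    have step : a.IsSubtreeOf t ↔ b.IsSubtreeOf t := by
      rcases hrel with hab | hba
      · exact key a b hab haV hbV hta
      · exact (key b a hba hbV haV htb).symm
    exact step.trans (ih htq)

theorem walk_exists_adj {α : Type} {G : SimpleGraph α} {u v : α} (p : G.Walk u v)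
    (hne : u ≠ v) : ∃ c, G.Adj u c ∧ c ∈ p.support := by
  cases p with
  | nil => exact absurd rfl hne
  | cons h q =>
    refine ⟨_, h, ?_⟩
    simp only [SimpleGraph.Walk.support_cons, List.mem_cons]
    exact Or.inr q.start_mem_support

theorem chain_bound (V : Vtree ι) (hnd : V.leavesList.Nodup) (x : ι) :
    {p : Vtree ι | p.IsSubtreeOf V ∧ p.isNodeB = true ∧ x ∈ p.varsFinset}.ncard
      ≤ V.depthV := by
  induction V with
  | leaf y =>
    have he : {p : Vtree ι | p.IsSubtreeOf (Vtree.leaf y) ∧ p.isNodeB = true ∧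
        x ∈ p.varsFinset} = ∅ := by
      ext p
      simp only [Set.mem_setOf_eq, Set.mem_empty_iff_false, iff_false, not_and]
      intro h1
      cases h1
      simp [Vtree.isNodeB]
    simp [he]
  | node l r ihl ihr =>
    have hndl : l.leavesList.Nodup := (List.nodup_append.mp hnd).1
    have hndr : r.leavesList.Nodup := (List.nodup_append.mp hnd).2.1
    by_cases hxl : x ∈ l.varsFinset
    · have hsub : {p : Vtree ι | p.IsSubtreeOf (Vtree.node l r) ∧ p.isNodeB = true ∧
          x ∈ p.varsFinset} ⊆ insert (Vtree.node l r)
          {p : Vtree ι | p.IsSubtreeOf l ∧ p.isNodeB = true ∧ x ∈ p.varsFinset} := by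
        rintro p ⟨hp, hpn, hpx⟩
        cases hp with
        | refl => exact Set.mem_insert _ _
        | left h => exact Set.mem_insert_of_mem _ ⟨h, hpn, hpx⟩
        | right h =>
          exact absurd hpx fun hpx =>
            Vtree.vars_disjoint_of_nodup hnd x hxl (Vtree.vars_subset h hpx)
      calc _ ≤ (insert (Vtree.node l r)
            {p : Vtree ι | p.IsSubtreeOf l ∧ p.isNodeB = true ∧ x ∈ p.varsFinset}).ncard :=
          Set.ncard_le_ncard hsub (Set.Finite.insert _
            ((Vtree.subtree_set_finite l).subset fun p hp => hp.1))
        _ ≤ _ + 1 := Set.ncard_insert_le _ _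
        _ ≤ l.depthV + 1 := by have := ihl hndl; omega
        _ ≤ (Vtree.node l r).depthV := by simp only [Vtree.depthV]; omega
    · by_cases hxr : x ∈ r.varsFinset
      · have hsub : {p : Vtree ι | p.IsSubtreeOf (Vtree.node l r) ∧ p.isNodeB = true ∧
            x ∈ p.varsFinset} ⊆ insert (Vtree.node l r)
            {p : Vtree ι | p.IsSubtreeOf r ∧ p.isNodeB = true ∧ x ∈ p.varsFinset} := by
          rintro p ⟨hp, hpn, hpx⟩
          cases hp with
          | refl => exact Set.mem_insert _ _
          | right h => exact Set.mem_insert_of_mem _ ⟨h, hpn, hpx⟩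
          | left h =>
            exact absurd hxr fun hxr =>
              Vtree.vars_disjoint_of_nodup hnd x (Vtree.vars_subset h hpx) hxr
        calc _ ≤ (insert (Vtree.node l r)
              {p : Vtree ι | p.IsSubtreeOf r ∧ p.isNodeB = true ∧ x ∈ p.varsFinset}).ncard :=
            Set.ncard_le_ncard hsub (Set.Finite.insert _
              ((Vtree.subtree_set_finite r).subset fun p hp => hp.1))
          _ ≤ _ + 1 := Set.ncard_insert_le _ _
          _ ≤ r.depthV + 1 := by have := ihr hndr; omega
          _ ≤ (Vtree.node l r).depthV := by simp only [Vtree.depthV]; omega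
      · have he : {p : Vtree ι | p.IsSubtreeOf (Vtree.node l r) ∧ p.isNodeB = true ∧
            x ∈ p.varsFinset} = ∅ := by
          ext p
          simp only [Set.mem_setOf_eq, Set.mem_empty_iff_false, iff_false, not_and]
          intro h1 _ hpx
          have : x ∈ (Vtree.node l r).varsFinset := Vtree.vars_subset h1 hpx
          simp [Vtree.varsFinset] at this
          tauto
        simp [he]

end Aux2

section Aux3
variable {ι : Type} [DecidableEq ι]

theorem block_core {V : Vtree ι} (hnd : V.leavesList.Nodup)
    {S : Set ι} {t : Vtree ι} (ht : t ∈ maxCover V S) {x : ι} (hx : x ∈ t.varsFinset)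
    {v : Vtree ι} (hv : v.IsSubtreeOf t → v = t) (hvne : v ≠ Vtree.leaf x)
    (p : (vtreeGraph V).Walk (Vtree.leaf x) v) :
    ∃ c ∈ replLeaf V t, c ∈ p.support := by
  cases t with
  | leaf y =>
    have hyx : x = y := by simpa [Vtree.varsFinset] using hx
    subst hyx
    obtain ⟨c, hadj, hmem⟩ := walk_exists_adj p (fun e => hvne e.symm)
    exact ⟨c, hadj, hmem⟩
  | node l r =>
    by_cases hts : Vtree.node l r ∈ p.support
    · exact ⟨Vtree.node l r, rfl, hts⟩
    · exfalso
      have hcut := cut_lemma hnd ht.1 p hts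
      have h1 : (Vtree.leaf x).IsSubtreeOf (Vtree.node l r) :=
        Vtree.leaf_isSubtreeOf_iff.mpr hx
      have h2 := hv (hcut.mp h1)
      exact hts (h2 ▸ p.end_mem_support)

theorem mem_replLeaf_cases {V : Vtree ι} {s v : Vtree ι} (hsV : s.IsSubtreeOf V)
    (hv : v ∈ replLeaf V s) :
    v.IsSubtreeOf V ∧ v.isNodeB = true ∧
      (v = s ∨ ∃ y, s = Vtree.leaf y ∧ (Vtree.leaf y).IsChildOf v) := by
  cases s with
  | node l r =>
    have hvs : v = Vtree.node l r := hv
    subst hvs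
    exact ⟨hsV, rfl, Or.inl rfl⟩
  | leaf y =>
    have hadj : (vtreeGraph V).Adj (Vtree.leaf y) v := hv
    obtain ⟨hrel, _, hvV⟩ := hadj
    have hchild : (Vtree.leaf y).IsChildOf v := by
      rcases hrel with h | h
      · exact h
      · exact h.elim
    have hnode : v.isNodeB = true := by
      cases v
      · exact hchild.elim
      · rfl
    exact ⟨hvV, hnode, Or.inr ⟨y, rfl, hchild⟩⟩

theorem replLeaf_finite (V : Vtree ι) (t : Vtree ι) : (replLeaf V t).Finite := by
  have : replLeaf V t ⊆ insert t {p : Vtree ι | p.IsSubtreeOf V} := by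
    intro v hv
    cases t with
    | node l r => exact Set.mem_insert_iff.mpr (Or.inl hv)
    | leaf y =>
      have hadj : (vtreeGraph V).Adj (Vtree.leaf y) v := hv
      exact Set.mem_insert_of_mem _ hadj.2.2
  exact Set.Finite.subset (Set.Finite.insert _ (Vtree.subtree_set_finite V)) this

theorem biUnion_replLeaf_ncard_le {V : Vtree ι} (hnd : V.leavesList.Nodup) (S : Set ι) :
    (⋃ t ∈ maxCover V S, replLeaf V t).ncard ≤ (maxCover V S).ncard := by
  classical
  set g : Vtree ι → Vtree ι := fun t =>
    match t with
    | .leaf y => if h : ∃ p, (vtreeGraph V).Adj (.leaf y) p then h.choose else .leaf y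
    | t => t with hg
  have hsub : (⋃ t ∈ maxCover V S, replLeaf V t) ⊆ g '' (maxCover V S) := by
    intro v hv
    simp only [Set.mem_iUnion, exists_prop] at hv
    obtain ⟨s, hs, hvs⟩ := hv
    refine ⟨s, hs, ?_⟩
    cases s with
    | node l r =>
      have hvs' : v = Vtree.node l r := hvs
      rw [hvs']
    | leaf y =>
      have hadj : (vtreeGraph V).Adj (Vtree.leaf y) v := hvs
      have hex : ∃ p, (vtreeGraph V).Adj (Vtree.leaf y) p := ⟨v, hadj⟩
      have hgeq : g (Vtree.leaf y) = hex.choose := by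
        show (if h : ∃ p, (vtreeGraph V).Adj (.leaf y) p then h.choose else .leaf y) = _
        rw [dif_pos hex]
      rw [hgeq]
      -- both hex.choose and v are parents of leaf y
      have h1 := hex.choose_spec
      have getpar : ∀ w : Vtree ι, (vtreeGraph V).Adj (Vtree.leaf y) w →
          (Vtree.leaf y).IsChildOf w ∧ w.IsSubtreeOf V := by
        intro w hw
        obtain ⟨hrel, _, hwV⟩ := hw
        refine ⟨?_, hwV⟩
        rcases hrel with h | h
        · exact h
        · exact h.elim
      obtain ⟨hc1, hV1⟩ := getpar _ h1
      obtain ⟨hc2, hV2⟩ := getpar _ hadj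
      exact Vtree.parent_unique hnd hV1 hV2 hc1 hc2
  calc (⋃ t ∈ maxCover V S, replLeaf V t).ncard
      ≤ (g '' (maxCover V S)).ncard :=
        Set.ncard_le_ncard hsub ((maxCover_finite V S).image g)
    _ ≤ (maxCover V S).ncard := Set.ncard_image_le (maxCover_finite V S)

theorem valid_univ_node {n : ℕ} (hn : 2 ≤ n) {W : Vtree (Fin n)}
    (hW : W.ValidOver Set.univ) : ∃ l r, W = Vtree.node l r := by
  cases W with
  | node l r => exact ⟨l, r, rfl⟩
  | leaf x =>
    exfalso
    have h0 : (⟨0, by omega⟩ : Fin n) ∈ (Vtree.leaf x : Vtree (Fin n)).leavesList :=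
      (hW.2 _).mpr trivial
    have h1 : (⟨1, by omega⟩ : Fin n) ∈ (Vtree.leaf x : Vtree (Fin n)).leavesList :=
      (hW.2 _).mpr trivial
    simp only [Vtree.leavesList, List.mem_singleton] at h0 h1
    have := congrArg Fin.val (h0.trans h1.symm)
    simp at this

theorem blocks_aux {V : Vtree ι} (hnd : V.leavesList.Nodup)
    {Sl Sr U : Set ι} (hdisj : ∀ z, z ∈ Sl → z ∉ Sr) (hsubU : Sl ⊆ U)
    {x : ι} (hx : x ∈ Sl) (hxV : (Vtree.leaf x).IsSubtreeOf V)
    {bv : Vtree ι}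
    (hbv : (∃ s ∈ maxCover V Sr, bv ∈ replLeaf V s) ∨
           (∃ s ∈ maxCover V U, bv ∈ replLeaf V s))
    (p : (vtreeGraph V).Walk (Vtree.leaf x) bv) :
    ∃ t ∈ maxCover V Sl, ∃ c ∈ replLeaf V t, c ∈ p.support := by
  obtain ⟨t, htC, hlt⟩ := exists_maxCover_above (Vtree.leaf x) hxV
    (by intro z hz; simp [Vtree.varsFinset] at hz; subst hz; exact hx)
  have hxt : x ∈ t.varsFinset := Vtree.vars_subset hlt (by simp [Vtree.varsFinset])
  have hmain : bv.isNodeB = true ∧ (bv.IsSubtreeOf t → bv = t) := by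
    rcases hbv with ⟨s, hsC, hbvs⟩ | ⟨s, hsC, hbvs⟩
    · obtain ⟨hbvV, hbvnode, hcase⟩ := mem_replLeaf_cases hsC.1 hbvs
      refine ⟨hbvnode, fun hbt => ?_⟩
      exfalso
      rcases hcase with rfl | ⟨y, rfl, hchild⟩
      · obtain ⟨z, hz⟩ := Vtree.varsFinset_nonempty bv
        have hzl : z ∈ Sl := htC.2.1 (Vtree.vars_subset hbt hz)
        have hzr : z ∈ Sr := hsC.2.1 hz
        exact hdisj z hzl hzr
      · have hyb : y ∈ bv.varsFinset :=
          Vtree.vars_subset hchild.isSubtreeOf' (by simp [Vtree.varsFinset])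
        have hyl : y ∈ Sl := htC.2.1 (Vtree.vars_subset hbt hyb)
        have hyr : y ∈ Sr := hsC.2.1 (by simp [Vtree.varsFinset])
        exact hdisj y hyl hyr
    · obtain ⟨hbvV, hbvnode, hcase⟩ := mem_replLeaf_cases hsC.1 hbvs
      refine ⟨hbvnode, fun hbt => ?_⟩
      rcases hcase with rfl | ⟨y, rfl, hchild⟩
      · exact (hsC.2.2 t htC.1 (htC.2.1.trans hsubU) hbt).symm
      · exfalso
        have hyb : y ∈ bv.varsFinset :=
          Vtree.vars_subset hchild.isSubtreeOf' (by simp [Vtree.varsFinset])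
        have hyt : y ∈ t.varsFinset := Vtree.vars_subset hbt hyb
        have hteq : t = Vtree.leaf y :=
          hsC.2.2 t htC.1 (htC.2.1.trans hsubU) (Vtree.leaf_isSubtreeOf_iff.mpr hyt)
        rw [hteq] at hbt
        cases hbt
        simp [Vtree.isNodeB] at hbvnode
  have hbvne : bv ≠ Vtree.leaf x := by
    intro e
    rw [e] at hmain
    simp [Vtree.isNodeB] at hmain
  obtain ⟨c, hc1, hc2⟩ := block_core hnd htC hxt hmain.2 hbvne p
  exact ⟨t, htC, c, hc1, hc2⟩

end Aux3

/-- Let `V` be a contiguous vtree of depth `d` over ordered variables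
`X₁, …, Xₙ`, with associated tree `G = V_{v→Z_v}`, and for each interval `[a,b]` let
`C_{a:b}` be the set of ⊆-maximal nodes of `V` whose covered interval is contained in
`{X_a, …, X_b}`.  Then: (i) the covered intervals of the elements of `C_{a:b}` partition
`{X_a, …, X_b}`; (ii) if `a ≤ c ≤ e ≤ b` then every element of `C_{c:e}` has an
ancestor-or-self in `C_{a:b}`; (iii) `|C_{a:b}| ≤ 4d`.  Consequently, for any contiguous
vtree `W` over `X₁, …, Xₙ`, assigning `C_w := C_{a:b}` to the node `w` with covered
interval `{X_a, …, X_b}` (replacing leaf-variable elements by their parents in `G`) yields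
a valid labelling of `W` with respect to `G` of cardinality at most `12d`. -/
theorem statement9 {n : ℕ} (hn : 2 ≤ n) (V : Vtree (Fin n))
    (hV : V.ValidOver Set.univ) (hVc : V.ContiguousV) :
    (∀ a b : ℕ,
      (∀ x : Fin n, x ∈ finInterval n a b →
        ∃! t : Vtree (Fin n), t ∈ maxCover V (finInterval n a b) ∧ x ∈ t.varsFinset) ∧
      (∀ c e : ℕ, a ≤ c → c ≤ e → e ≤ b →
        ∀ t ∈ maxCover V (finInterval n c e),
          ∃ u ∈ maxCover V (finInterval n a b), t.IsSubtreeOf u) ∧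
      (maxCover V (finInterval n a b)).ncard ≤ 4 * V.depthV) ∧
    ∀ W : Vtree (Fin n), W.ValidOver Set.univ → W.ContiguousV →
      IsValidLabelling (vtreeGraph V) Vtree.leaf Set.univ W (coverLabel V W) ∧
      ∀ l r : Vtree (Fin n), (Vtree.node l r).IsSubtreeOf W →
        (coverLabel V W l ∪ coverLabel V W r ∪
          coverLabel V W (Vtree.node l r)).ncard ≤ 12 * V.depthV := by
  classical
  obtain ⟨hnd, hmem⟩ := hV
  have hleafV : ∀ x : Fin n, (Vtree.leaf x).IsSubtreeOf V := fun x =>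
    Vtree.leaf_isSubtreeOf_iff.mpr (Vtree.mem_vars_iff_mem_leaves.mpr ((hmem x).mpr trivial))
  obtain ⟨Vl, Vr, hVeq⟩ := valid_univ_node hn ⟨hnd, hmem⟩
  have hd1 : 1 ≤ V.depthV := by rw [hVeq]; simp only [Vtree.depthV]; omega
  -- Part (iii)
  have partiii : ∀ a b : ℕ, (maxCover V (finInterval n a b)).ncard ≤ 4 * V.depthV := by
    intro a b
    set S := finInterval n a b with hS
    set C := maxCover V S with hC
    have hCfin : C.Finite := maxCover_finite V S
    set f : Vtree (Fin n) → Vtree (Fin n) := fun t =>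
      if h : ∃ p, p.IsSubtreeOf V ∧ t.IsChildOf p then h.choose else t with hf
    set A := {p : Vtree (Fin n) | p.IsSubtreeOf V ∧ p.isNodeB = true ∧
      ∃ i : Fin n, i ∈ p.varsFinset ∧ (i : ℕ) + 1 = a} with hA
    set B := {p : Vtree (Fin n) | p.IsSubtreeOf V ∧ p.isNodeB = true ∧
      ∃ i : Fin n, i ∈ p.varsFinset ∧ (i : ℕ) = b + 1} with hB
    have hAfin : A.Finite := (Vtree.subtree_set_finite V).subset fun p hp => hp.1
    have hBfin : B.Finite := (Vtree.subtree_set_finite V).subset fun p hp => hp.1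
    have boundA : A.ncard ≤ V.depthV := by
      rcases Set.eq_empty_or_nonempty A with he | ⟨p0, hp0⟩
      · simp [he]
      · obtain ⟨i0, hi0, hi0a⟩ := hp0.2.2
        have hsub : A ⊆ {p : Vtree (Fin n) | p.IsSubtreeOf V ∧ p.isNodeB = true ∧
            i0 ∈ p.varsFinset} := by
          rintro p ⟨h1, h2, i, hi, hia⟩
          have : i = i0 := Fin.ext (by omega)
          exact ⟨h1, h2, this ▸ hi⟩
        exact le_trans (Set.ncard_le_ncard hsub
          ((Vtree.subtree_set_finite V).subset fun p hp => hp.1)) (chain_bound V hnd i0)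
    have boundB : B.ncard ≤ V.depthV := by
      rcases Set.eq_empty_or_nonempty B with he | ⟨p0, hp0⟩
      · simp [he]
      · obtain ⟨i0, hi0, hi0a⟩ := hp0.2.2
        have hsub : B ⊆ {p : Vtree (Fin n) | p.IsSubtreeOf V ∧ p.isNodeB = true ∧
            i0 ∈ p.varsFinset} := by
          rintro p ⟨h1, h2, i, hi, hia⟩
          have : i = i0 := Fin.ext (by omega)
          exact ⟨h1, h2, this ▸ hi⟩
        exact le_trans (Set.ncard_le_ncard hsub
          ((Vtree.subtree_set_finite V).subset fun p hp => hp.1)) (chain_bound V hnd i0)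
    have hmapsto : ∀ t ∈ C \ {V}, (f t ∈ A ∪ B) ∧ t.IsChildOf (f t) := by
      rintro t ⟨htC, htV'⟩
      have hpar : ∃ p, p.IsSubtreeOf V ∧ t.IsChildOf p := by
        rcases Vtree.eq_or_exists_parent htC.1 with rfl | hp
        · exact absurd rfl htV'
        · exact hp
      have hfeq : f t = hpar.choose := by rw [hf]; simp only; rw [dif_pos hpar]
      obtain ⟨hpV, htp⟩ := hpar.choose_spec
      rw [hfeq]
      set p := hpar.choose with hp
      refine ⟨?_, htp⟩
      have hpn : p.isNodeB = true := by
        cases hp2 : p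
        · rw [hp2] at htp; exact htp.elim
        · rfl
      have hnotsub : ¬ ((p.varsFinset : Set (Fin n)) ⊆ S) := by
        intro hsub
        have heq := htC.2.2 p hpV hsub htp.isSubtreeOf'
        have hlt := Vtree.numNodesV_lt_of_isChildOf htp
        rw [heq] at hlt
        omega
      obtain ⟨m, hm, hmS⟩ := Set.not_subset.mp hnotsub
      obtain ⟨x0, hx0⟩ := Vtree.varsFinset_nonempty t
      have hx0p : x0 ∈ p.varsFinset := Vtree.vars_subset htp.isSubtreeOf' hx0
      have hx0S : x0 ∈ S := htC.2.1 hx0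
      obtain ⟨a', b', hint⟩ := hVc p hpV
      simp only [hS, finInterval, Set.mem_setOf_eq] at hmS hx0S
      have hm' := (hint m).mp (Finset.mem_coe.mp hm)
      have hx0' := (hint x0).mp hx0p
      have hx0lt := x0.isLt
      have hmlt := m.isLt
      rcases lt_or_ge (m : ℕ) a with hlt | hge
      · left
        have hbnd : a - 1 < n := by omega
        exact ⟨hpV, hpn, ⟨a - 1, hbnd⟩, (hint _).mpr ⟨by simp; omega, by simp; omega⟩,
          by simp; omega⟩
      · right
        have hgt : b < (m : ℕ) := by omega
        have hbnd : b + 1 < n := by omega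
        exact ⟨hpV, hpn, ⟨b + 1, hbnd⟩, (hint _).mpr ⟨by simp; omega, by simp; omega⟩,
          by simp⟩
    have hinj : Set.InjOn f (C \ {V}) := by
      rintro t1 h1 t2 h2 he
      by_contra hne
      obtain ⟨hm1, hc1⟩ := hmapsto t1 h1
      obtain ⟨hm2, hc2⟩ := hmapsto t2 h2
      rw [he] at hc1
      have hpV : (f t2).IsSubtreeOf V := by rcases hm2 with h | h; exacts [h.1, h.1]
      have hpS : ((f t2).varsFinset : Set (Fin n)) ⊆ S := by
        cases hp2 : f t2 with
        | leaf y => rw [hp2] at hc1; exact hc1.elim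
        | node l r =>
          rw [hp2] at hc1 hc2
          have hlr : (l = t1 ∧ r = t2) ∨ (l = t2 ∧ r = t1) := by
            rcases hc1 with e1 | e1 <;> rcases hc2 with e2 | e2
            · exact absurd (e1.trans e2.symm) hne
            · exact Or.inl ⟨e1.symm, e2.symm⟩
            · exact Or.inr ⟨e2.symm, e1.symm⟩
            · exact absurd (e1.trans e2.symm) hne
          intro z hz
          have hz' : z ∈ l.varsFinset ∨ z ∈ r.varsFinset := by
            have : z ∈ (Vtree.node l r).varsFinset := Finset.mem_coe.mp hz
            simpa [Vtree.varsFinset] using this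
          rcases hlr with ⟨rfl, rfl⟩ | ⟨rfl, rfl⟩ <;> rcases hz' with h | h <;>
            first
              | exact h1.1.2.1 (Finset.mem_coe.mpr h)
              | exact h2.1.2.1 (Finset.mem_coe.mpr h)
      have heq := h1.1.2.2 (f t2) hpV hpS hc1.isSubtreeOf'
      have hlt := Vtree.numNodesV_lt_of_isChildOf hc1
      rw [heq] at hlt
      omega
    have hcount : (C \ {V}).ncard ≤ 2 * V.depthV := by
      have himg : f '' (C \ {V}) ⊆ A ∪ B := by
        rintro _ ⟨t, ht, rfl⟩; exact (hmapsto t ht).1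
      calc (C \ {V}).ncard = (f '' (C \ {V})).ncard := (Set.ncard_image_of_injOn hinj).symm
        _ ≤ (A ∪ B).ncard := Set.ncard_le_ncard himg (hAfin.union hBfin)
        _ ≤ A.ncard + B.ncard := Set.ncard_union_le _ _
        _ ≤ 2 * V.depthV := by omega
    have hins : C ⊆ insert V (C \ {V}) := by
      intro t ht
      by_cases h : t = V
      · simp [h]
      · exact Set.mem_insert_of_mem _ ⟨ht, h⟩
    calc C.ncard ≤ (insert V (C \ {V})).ncard :=
        Set.ncard_le_ncard hins (Set.Finite.insert _ hCfin.diff)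
      _ ≤ (C \ {V}).ncard + 1 := Set.ncard_insert_le _ _
      _ ≤ 4 * V.depthV := by omega
  refine ⟨fun a b => ⟨?_, ?_, partiii a b⟩, ?_⟩
  · -- (i)
    intro x hx
    obtain ⟨u, hu, hlu⟩ := exists_maxCover_above (Vtree.leaf x) (hleafV x)
      (by intro z hz; simp [Vtree.varsFinset] at hz; subst hz; exact hx)
    have hxu : x ∈ u.varsFinset := Vtree.vars_subset hlu (by simp [Vtree.varsFinset])
    refine ⟨u, ⟨hu, hxu⟩, ?_⟩
    rintro t ⟨htC, hxt⟩
    exact maxCover_unique hnd htC hu hxt hxu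
  · -- (ii)
    intro c e hac hce heb t htC
    refine exists_maxCover_above t htC.1 (htC.2.1.trans ?_)
    intro i hi
    exact ⟨le_trans hac hi.1, le_trans hi.2 heb⟩
  · -- part 2
    intro W hW hWc
    obtain ⟨hndW, hmemW⟩ := hW
    obtain ⟨Wl, Wr, hWeq⟩ := valid_univ_node hn ⟨hndW, hmemW⟩
    have hWne : ∀ x : Fin n, Vtree.leaf x ≠ W := by
      intro x h; rw [hWeq] at h; cases h
    have hproper : ∀ l r : Vtree (Fin n), (Vtree.node l r).IsSubtreeOf W →
        l ≠ W ∧ r ≠ W ∧ l.IsSubtreeOf W ∧ r.IsSubtreeOf W := by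
      intro l r hlr
      have hlsub : l.IsSubtreeOf W := (Vtree.IsSubtreeOf.left (.refl l)).trans' hlr
      have hrsub : r.IsSubtreeOf W := (Vtree.IsSubtreeOf.right (.refl r)).trans' hlr
      have hn1 : (Vtree.node l r).numNodesV ≤ W.numNodesV := by
        rcases Vtree.eq_or_lt_of_subtree hlr with rfl | h
        · exact le_rfl
        · omega
      have hnl : l.numNodesV < (Vtree.node l r).numNodesV := by
        simp only [Vtree.numNodesV]; omega
      have hnr : r.numNodesV < (Vtree.node l r).numNodesV := by
        simp only [Vtree.numNodesV]; omega
      refine ⟨fun e => ?_, fun e => ?_, hlsub, hrsub⟩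
      · subst e; omega
      · subst e; omega
    have hlabel : ∀ w : Vtree (Fin n), w ≠ W →
        coverLabel V W w = ⋃ t ∈ maxCover V ((w.varsFinset : Set (Fin n))), replLeaf V t :=
      fun w hw => if_neg hw
    have hvertex : ∀ (w : Vtree (Fin n)) (v : Vtree (Fin n)), v ∈ coverLabel V W w →
        ∃ s ∈ maxCover V ((w.varsFinset : Set (Fin n))), v ∈ replLeaf V s := by
      intro w v hv
      by_cases hw : w = W
      · rw [hw] at hv
        rw [show coverLabel V W W = ∅ from if_pos rfl] at hv
        exact hv.elim
      · rw [hlabel w hw] at hv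
        simpa using hv
    constructor
    · refine ⟨if_pos rfl, ?_, ?_, ?_, ?_⟩
      · -- leaf_parent
        intro x hxW
        rw [hlabel _ (hWne x)]
        have hvs : ((Vtree.leaf x : Vtree (Fin n)).varsFinset : Set (Fin n)) = {x} := by
          simp [Vtree.varsFinset]
        rw [hvs, maxCover_singleton hnd (hleafV x), Set.biUnion_singleton]
        rfl
      · -- covers
        intro l r hlr av bv hav hbv p
        obtain ⟨x, hxmem, rfl⟩ := hav
        obtain ⟨y, hymem, rfl⟩ := hbv
        by_cases hw : Vtree.node l r = W
        · exfalso
          apply hymem.2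
          rw [hw]
          exact Finset.mem_coe.mpr (Vtree.mem_vars_iff_mem_leaves.mpr ((hmemW y).mpr trivial))
        · obtain ⟨t, htC, hlt⟩ := exists_maxCover_above (Vtree.leaf x) (hleafV x)
            (by intro z hz; simp [Vtree.varsFinset] at hz; subst hz; exact hxmem)
          have hxt : x ∈ t.varsFinset := Vtree.vars_subset hlt (by simp [Vtree.varsFinset])
          have hvimp : (Vtree.leaf y).IsSubtreeOf t → Vtree.leaf y = t := by
            intro h
            exfalso
            have hyt : y ∈ t.varsFinset := Vtree.leaf_isSubtreeOf_iff.mp h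
            exact hymem.2 (htC.2.1 (Finset.mem_coe.mpr hyt))
          have hyne : Vtree.leaf y ≠ Vtree.leaf x := by
            intro h
            have : y = x := by injection h
            rw [this] at hymem
            exact hymem.2 hxmem
          obtain ⟨c, hc1, hc2⟩ := block_core hnd htC hxt hvimp hyne p
          exact ⟨c, by rw [hlabel _ hw]; exact Set.mem_biUnion htC hc1, hc2⟩
      · -- blocks_left
        intro l r hlr av bv hav hbv p
        obtain ⟨x, hxl, rfl⟩ := hav
        obtain ⟨hlne, hrne, hlsub, hrsub⟩ := hproper l r hlr
        have hndlr : (Vtree.node l r).leavesList.Nodup :=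
          Vtree.nodup_of_subtree (hlr.trans' (.refl W)) hndW
        have hdisj : ∀ z : Fin n, z ∈ (l.varsFinset : Set (Fin n)) →
            z ∉ (r.varsFinset : Set (Fin n)) := fun z hz hz' =>
          Vtree.vars_disjoint_of_nodup hndlr z (Finset.mem_coe.mp hz) (Finset.mem_coe.mp hz')
        have hsubU : (l.varsFinset : Set (Fin n)) ⊆
            (((Vtree.node l r).varsFinset : Finset (Fin n)) : Set (Fin n)) := by
          intro z hz
          simp only [Vtree.varsFinset, Finset.coe_union, Set.mem_union]
          exact Or.inl hz
        have hbv' : (∃ s ∈ maxCover V ((r.varsFinset : Set (Fin n))), bv ∈ replLeaf V s) ∨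
            (∃ s ∈ maxCover V (((Vtree.node l r).varsFinset : Finset (Fin n)) : Set (Fin n)),
              bv ∈ replLeaf V s) := by
          rcases hbv with h | h
          · exact Or.inl (hvertex r bv h)
          · exact Or.inr (hvertex _ bv h)
        obtain ⟨t, htC, c, hc1, hc2⟩ := blocks_aux hnd hdisj hsubU hxl (hleafV x) hbv' p
        exact ⟨c, by rw [hlabel l hlne]; exact Set.mem_biUnion htC hc1, hc2⟩
      · -- blocks_right
        intro l r hlr av bv hav hbv p
        obtain ⟨x, hxr, rfl⟩ := hav
        obtain ⟨hlne, hrne, hlsub, hrsub⟩ := hproper l r hlr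
        have hndlr : (Vtree.node l r).leavesList.Nodup :=
          Vtree.nodup_of_subtree (hlr.trans' (.refl W)) hndW
        have hdisj : ∀ z : Fin n, z ∈ (r.varsFinset : Set (Fin n)) →
            z ∉ (l.varsFinset : Set (Fin n)) := fun z hz hz' =>
          Vtree.vars_disjoint_of_nodup hndlr z (Finset.mem_coe.mp hz') (Finset.mem_coe.mp hz)
        have hsubU : (r.varsFinset : Set (Fin n)) ⊆
            (((Vtree.node l r).varsFinset : Finset (Fin n)) : Set (Fin n)) := by
          intro z hz
          simp only [Vtree.varsFinset, Finset.coe_union, Set.mem_union]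
          exact Or.inr hz
        have hbv' : (∃ s ∈ maxCover V ((l.varsFinset : Set (Fin n))), bv ∈ replLeaf V s) ∨
            (∃ s ∈ maxCover V (((Vtree.node l r).varsFinset : Finset (Fin n)) : Set (Fin n)),
              bv ∈ replLeaf V s) := by
          rcases hbv with h | h
          · exact Or.inl (hvertex l bv h)
          · exact Or.inr (hvertex _ bv h)
        obtain ⟨t, htC, c, hc1, hc2⟩ := blocks_aux hnd hdisj hsubU hxr (hleafV x) hbv' p
        exact ⟨c, by rw [hlabel r hrne]; exact Set.mem_biUnion htC hc1, hc2⟩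
    · -- cardinality
      intro l r hlr
      have bound1 : ∀ u : Vtree (Fin n), u.IsSubtreeOf W →
          (coverLabel V W u).ncard ≤ 4 * V.depthV := by
        intro u hu
        by_cases huW : u = W
        · rw [huW, show coverLabel V W W = ∅ from if_pos rfl]
          simp
        · rw [hlabel u huW]
          obtain ⟨a, b, hint⟩ := hWc u hu
          have hSeq : ((u.varsFinset : Finset (Fin n)) : Set (Fin n)) = finInterval n a b := by
            ext i
            simp only [Finset.mem_coe, finInterval, Set.mem_setOf_eq]
            exact hint i
          calc (⋃ t ∈ maxCover V ((u.varsFinset : Finset (Fin n)) : Set (Fin n)),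
                replLeaf V t).ncard
              ≤ (maxCover V ((u.varsFinset : Finset (Fin n)) : Set (Fin n))).ncard :=
              biUnion_replLeaf_ncard_le hnd _
            _ ≤ 4 * V.depthV := by rw [hSeq]; exact partiii a b
      obtain ⟨hlne, hrne, hlsub, hrsub⟩ := hproper l r hlr
      have h1 := bound1 l hlsub
      have h2 := bound1 r hrsub
      have h3 := bound1 (Vtree.node l r) hlr
      calc (coverLabel V W l ∪ coverLabel V W r ∪ coverLabel V W (Vtree.node l r)).ncard
          ≤ (coverLabel V W l ∪ coverLabel V W r).ncard +
            (coverLabel V W (Vtree.node l r)).ncard := Set.ncard_union_le _ _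
        _ ≤ (coverLabel V W l).ncard + (coverLabel V W r).ncard +
            (coverLabel V W (Vtree.node l r)).ncard := by
            have := Set.ncard_union_le (coverLabel V W l) (coverLabel V W r); omega
        _ ≤ 12 * V.depthV := by omega
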